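/- Let T be a tree and S = (S_A, S_B, S_C) a labeling of T such that (T, S) belongs to the family 𝒯. Then every support vertex of T belongs to S_A and every leaf of T belongs to S_C. -/

import Mathlib

open SimpleGraph

/-- A dominating set: every vertex outside `S` has a neighbor in `S`. -/
def IsDominatingSet {V : Type} (G : SimpleGraph V) (S : Set V) : Prop :=
  ∀ v ∉ S, ∃ u ∈ S, G.Adj u v

/-- A total dominating set: every vertex has a neighbor in `S`. -/
def IsTotalDominatingSet {V : Type} (G : SimpleGraph V) (S : Set V) : Prop :=
  ∀ v : V, ∃ u ∈ S, G.Adj u v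

/-- `u` is within distance two of `v`. -/
def WithinTwo {V : Type} (G : SimpleGraph V) (u v : V) : Prop :=
  G.Adj u v ∨ ∃ w, G.Adj u w ∧ G.Adj w v

/-- A semitotal dominating set: a dominating set in which every vertex is within
distance two of another vertex of the set. -/
def IsSemitotalDominatingSet {V : Type} (G : SimpleGraph V) (S : Set V) : Prop :=
  IsDominatingSet G S ∧ ∀ v ∈ S, ∃ u ∈ S, u ≠ v ∧ WithinTwo G u v

/-- The domination number `γ(G)`. -/
noncomputable def dominationNumber {V : Type} (G : SimpleGraph V) : ℕ :=
  sInf {n | ∃ S : Set V, IsDominatingSet G S ∧ S.ncard = n}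

/-- The total domination number `γ_t(G)`. -/
noncomputable def totalDominationNumber {V : Type} (G : SimpleGraph V) : ℕ :=
  sInf {n | ∃ S : Set V, IsTotalDominatingSet G S ∧ S.ncard = n}

/-- The semitotal domination number `γ_t2(G)`. -/
noncomputable def semitotalDominationNumber {V : Type} (G : SimpleGraph V) : ℕ :=
  sInf {n | ∃ S : Set V, IsSemitotalDominatingSet G S ∧ S.ncard = n}

/-- A leaf: a vertex of degree one. -/
def IsLeaf {V : Type} (G : SimpleGraph V) (v : V) : Prop :=
  (G.neighborSet v).ncard = 1

/-- A support vertex: a vertex adjacent to a leaf. -/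
def IsSupport {V : Type} (G : SimpleGraph V) (v : V) : Prop :=
  ∃ u, G.Adj v u ∧ IsLeaf G u

/-- A star: a graph isomorphic to `K_{1,m}` for some `m ≥ 1`. -/
def IsStar {V : Type} (G : SimpleGraph V) : Prop :=
  ∃ m : ℕ, 1 ≤ m ∧ Nonempty (G ≃g completeBipartiteGraph Unit (Fin m))

/-- The graph obtained from the disjoint union of `G` and `H` by adding
the single edge joining `v : V` to `w : W`. -/
def attach {V W : Type} (G : SimpleGraph V) (H : SimpleGraph W) (v : V) (w : W) :
    SimpleGraph (V ⊕ W) where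
  Adj x y :=
    match x, y with
    | Sum.inl a, Sum.inl b => G.Adj a b
    | Sum.inr a, Sum.inr b => H.Adj a b
    | Sum.inl a, Sum.inr b => a = v ∧ b = w
    | Sum.inr a, Sum.inl b => b = v ∧ a = w
  symm := ⟨by
    rintro (a | a) (b | b) h
    · exact G.adj_symm h
    · exact ⟨h.1, h.2⟩
    · exact ⟨h.1, h.2⟩
    · exact H.adj_symm h⟩
  loopless := ⟨by
    rintro (a | a) h
    · exact G.irrefl h
    · exact H.irrefl h⟩

/-- The statuses used to label the vertices of trees in the family `𝒯`. -/
inductive Label : Type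
  | A | B | C
deriving DecidableEq

/-- The labeling of the path `P₅` assigning `A` to the two support vertices,
`C` to the two leaves and `B` to the center. -/
def pathLabel : Fin 5 → Label
  | 0 => Label.C
  | 1 => Label.A
  | 2 => Label.B
  | 3 => Label.A
  | 4 => Label.C

/-- The family `𝒯` of labeled trees: it contains the labeled path `P₅`, and is closed
under operation `𝒪₁` (attach a new leaf labeled `C` to a vertex labeled `A`), operation
`𝒪₂` (attach a labeled path `P₅` to a degree-one vertex labeled `C`), and under
isomorphism of labeled graphs. -/
inductive TFamily : ∀ {V : Type}, SimpleGraph V → (V → Label) → Prop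
  | base : TFamily (SimpleGraph.pathGraph 5) pathLabel
  | op1 {V : Type} {G : SimpleGraph V} {f : V → Label} (v : V)
      (hv : f v = Label.A) (h : TFamily G f) :
      TFamily (attach G (⊥ : SimpleGraph (Fin 1)) v 0)
        (Sum.elim f (fun _ => Label.C))
  | op2 {V : Type} {G : SimpleGraph V} {f : V → Label} (v : V)
      (hv : f v = Label.C) (hdeg : (G.neighborSet v).ncard = 1) (h : TFamily G f) :
      TFamily (attach G (SimpleGraph.pathGraph 5) v 0) (Sum.elim f pathLabel)
  | iso {V W : Type} {G : SimpleGraph V} {H : SimpleGraph W} {f : V → Label}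
      (e : G ≃g H) (h : TFamily G f) : TFamily H (fun w => f (e.symm w))

/-- The subdivided star with `t` leaves: center `none`, and for each `i : Fin t`
a path `none — some (i,0) — some (i,1)`. -/
def subdividedStar (t : ℕ) : SimpleGraph (Option (Fin t × Fin 2)) :=
  SimpleGraph.fromRel (fun x y =>
    match x, y with
    | none, some p => p.2 = 0
    | some p, some q => p.1 = q.1 ∧ p.2 = 0 ∧ q.2 = 1
    | _, _ => False)

/-- The tree `Y` with three leaves, obtained from the star `K_{1,3}` with center `0`
by subdividing exactly one edge: edges `0-1`, `0-2`, `0-3`, `3-4`.  Its leaves are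
`1`, `2`, `4`; the leaf-neighbors of the center are `1` and `2`. -/
def Ytree : SimpleGraph (Fin 5) :=
  SimpleGraph.fromRel (fun x y =>
    (x = 0 ∧ y = 1) ∨ (x = 0 ∧ y = 2) ∨ (x = 0 ∧ y = 3) ∨ (x = 3 ∧ y = 4))

/-- An almost dominating set of `G` relative to `v`: dominates every vertex except
possibly `v`. -/
def IsAlmostDominatingSet {V : Type} (G : SimpleGraph V) (v : V) (S : Set V) : Prop :=
  ∀ w, w ≠ v → w ∉ S → ∃ u ∈ S, G.Adj u w

/-- The almost domination number `γ(G; v)`. -/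
noncomputable def almostDominationNumber {V : Type} (G : SimpleGraph V) (v : V) : ℕ :=
  sInf {n | ∃ S : Set V, IsAlmostDominatingSet G v S ∧ S.ncard = n}

/-- The family `𝒪` of trees: all trees obtainable from the path `P₄` by a finite
sequence of the operations `𝒪₁`–`𝒪₄` (and taking isomorphic copies). -/
inductive OFamily : ∀ {V : Type}, SimpleGraph V → Prop
  | base : OFamily (SimpleGraph.pathGraph 4)
  | op1 {V : Type} {G : SimpleGraph V} (v : V)
      (hv : ∃ S : Set V, IsSemitotalDominatingSet G S ∧
        S.ncard = semitotalDominationNumber G ∧ v ∈ S)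
      (h : OFamily G) :
      OFamily (attach G (⊥ : SimpleGraph (Fin 1)) v 0)
  | op2short {V : Type} {G : SimpleGraph V} (v : V)
      (hv : almostDominationNumber G v = dominationNumber G) (h : OFamily G) :
      OFamily (attach G (SimpleGraph.pathGraph 2) v 0)
  | op2long {V : Type} {G : SimpleGraph V} (v : V)
      (hv : almostDominationNumber G v = dominationNumber G) (h : OFamily G) :
      OFamily (attach G (SimpleGraph.pathGraph 5) v 0)
  | op3 {V : Type} {G : SimpleGraph V} (v : V) (t : ℕ) (ht : 2 ≤ t) (h : OFamily G) :
      OFamily (attach G (subdividedStar t) v none)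
  | op4 {V : Type} {G : SimpleGraph V} (v : V) (h : OFamily G) :
      OFamily (attach G Ytree v 1)
  | iso {V W : Type} {G : SimpleGraph V} {H : SimpleGraph W}
      (e : G ≃g H) (h : OFamily G) : OFamily H

/-! ### Auxiliary lemmas -/

section Aux

variable {V W : Type} {G : SimpleGraph V} {H : SimpleGraph W} {v : V} {w : W}

lemma attach_adj_inl_inl {a b : V} :
    (attach G H v w).Adj (.inl a) (.inl b) ↔ G.Adj a b := Iff.rfl

lemma attach_adj_inl_inr {a : V} {b : W} :
    (attach G H v w).Adj (.inl a) (.inr b) ↔ a = v ∧ b = w := Iff.rfl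

lemma attach_adj_inr_inl {a : W} {b : V} :
    (attach G H v w).Adj (.inr a) (.inl b) ↔ b = v ∧ a = w := Iff.rfl

lemma attach_adj_inr_inr {a b : W} :
    (attach G H v w).Adj (.inr a) (.inr b) ↔ H.Adj a b := Iff.rfl

lemma ncard_ne_one_of_two {α : Type*} {s : Set α} {a b : α} (ha : a ∈ s) (hb : b ∈ s)
    (hab : a ≠ b) : s.ncard ≠ 1 := by
  intro h
  obtain ⟨x, hx⟩ := Set.ncard_eq_one.mp h
  subst hx
  exact hab (ha.trans hb.symm)

lemma notLeaf_of_two {u a b : V} (ha : G.Adj u a) (hb : G.Adj u b) (hab : a ≠ b) :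
    ¬ IsLeaf G u :=
  ncard_ne_one_of_two (s := G.neighborSet u) ha hb hab

lemma mem_nbr {V : Type} {G : SimpleGraph V} {a b : V} (h : G.Adj a b) :
    b ∈ G.neighborSet a := h

lemma attach_neighborSet_inl {u : V} (huv : u ≠ v) :
    (attach G H v w).neighborSet (.inl u) = Sum.inl '' G.neighborSet u := by
  ext x
  rcases x with a | a <;>
    simp [SimpleGraph.mem_neighborSet, attach_adj_inl_inl, attach_adj_inl_inr, huv]

lemma isLeaf_inl_of_ne {u : V} (huv : u ≠ v) (h : IsLeaf (attach G H v w) (.inl u)) :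
    IsLeaf G u := by
  unfold IsLeaf at *
  rwa [attach_neighborSet_inl huv, Set.ncard_image_of_injective _ Sum.inl_injective] at h

lemma iso_isLeaf {e : G ≃g H} {u : W} (h : IsLeaf H u) : IsLeaf G (e.symm u) := by
  have hc : Nat.card (H.neighborSet u) = Nat.card (G.neighborSet (e.symm u)) :=
    Nat.card_congr (SimpleGraph.Iso.mapNeighborSet e.symm u)
  unfold IsLeaf at *
  rw [← Nat.card_coe_set_eq, ← hc, Nat.card_coe_set_eq]
  exact h

end Aux

instance : DecidableRel (SimpleGraph.pathGraph 5).Adj :=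
  fun _ _ => decidable_of_iff _ SimpleGraph.pathGraph_adj.symm

lemma path5_facts : (∀ u : Fin 5, ((pathGraph 5).neighborSet u).Nonempty) ∧
    (∀ u : Fin 5, IsLeaf (pathGraph 5) u → u = 0 ∨ u = 4) ∧
    (∀ u : Fin 5, IsSupport (pathGraph 5) u → u = 1 ∨ u = 3) := by
  simp only [IsSupport, IsLeaf, Set.ncard_eq_toFinset_card', Set.Nonempty]
  decide

lemma tfam_aux {V : Type} {G : SimpleGraph V} {f : V → Label} (h : TFamily G f) :
    (∀ u, (G.neighborSet u).Nonempty) ∧ (∀ u, IsSupport G u → f u = Label.A) ∧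
      (∀ u, IsLeaf G u → f u = Label.C) := by
  induction h with
  | base =>
    obtain ⟨h1, h2, h3⟩ := path5_facts
    refine ⟨h1, fun u hu => ?_, fun u hu => ?_⟩
    · rcases h3 u hu with rfl | rfl <;> rfl
    · rcases h2 u hu with rfl | rfl <;> rfl
  | @op1 V' G f v hv h ih =>
    obtain ⟨hne, hs, hl⟩ := ih
    -- `inl v` is not a leaf in the attached graph
    obtain ⟨x, hx⟩ := hne v
    have hnlv : ¬ IsLeaf (attach G (⊥ : SimpleGraph (Fin 1)) v 0) (.inl v) :=
      notLeaf_of_two (a := Sum.inl x) (b := Sum.inr 0)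
        (attach_adj_inl_inl.mpr hx) (attach_adj_inl_inr.mpr ⟨rfl, rfl⟩) (by simp)
    refine ⟨?_, ?_, ?_⟩
    · rintro (u | b)
      · obtain ⟨y, hy⟩ := hne u
        exact ⟨Sum.inl y, mem_nbr (attach_adj_inl_inl.mpr hy)⟩
      · exact ⟨Sum.inl v, mem_nbr (attach_adj_inr_inl.mpr ⟨rfl, Subsingleton.elim _ _⟩)⟩
    · rintro (u | b) ⟨y, hy, hyl⟩
      · rcases y with u' | b
        · by_cases huv : u' = v
          · subst huv; exact absurd hyl hnlv
          · exact hs u ⟨u', attach_adj_inl_inl.mp hy, isLeaf_inl_of_ne huv hyl⟩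
        · obtain ⟨rfl, rfl⟩ := attach_adj_inl_inr.mp hy
          simpa using hv
      · rcases y with a | b'
        · obtain ⟨rfl, rfl⟩ := attach_adj_inr_inl.mp hy
          exact absurd hyl hnlv
        · exact absurd (attach_adj_inr_inr.mp hy) (by simp)
    · rintro (u | b) hu
      · by_cases huv : u = v
        · subst huv; exact absurd hu hnlv
        · simpa using hl u (isLeaf_inl_of_ne huv hu)
      · rfl
  | @op2 V' G f v hv hdeg h ih =>
    obtain ⟨hne, hs, hl⟩ := ih
    obtain ⟨z, hz⟩ := Set.ncard_eq_one.mp hdeg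
    have hzadj : G.Adj v z := by
      have : z ∈ G.neighborSet v := by rw [hz]; rfl
      exact this
    have hnlv : ¬ IsLeaf (attach G (pathGraph 5) v 0) (.inl v) :=
      notLeaf_of_two (a := Sum.inl z) (b := Sum.inr 0)
        (attach_adj_inl_inl.mpr hzadj) (attach_adj_inl_inr.mpr ⟨rfl, rfl⟩) (by simp)
    have hnlp : ∀ j : Fin 5, j ≠ 4 → ¬ IsLeaf (attach G (pathGraph 5) v 0) (.inr j) := by
      intro j hj
      fin_cases j
      · exact notLeaf_of_two (a := Sum.inl v) (b := Sum.inr 1)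
          (attach_adj_inr_inl.mpr ⟨rfl, rfl⟩) (attach_adj_inr_inr.mpr (by decide)) (by simp)
      · exact notLeaf_of_two (a := Sum.inr 0) (b := Sum.inr 2)
          (attach_adj_inr_inr.mpr (by decide)) (attach_adj_inr_inr.mpr (by decide)) (by simp)
      · exact notLeaf_of_two (a := Sum.inr 1) (b := Sum.inr 3)
          (attach_adj_inr_inr.mpr (by decide)) (attach_adj_inr_inr.mpr (by decide)) (by simp)
      · exact notLeaf_of_two (a := Sum.inr 2) (b := Sum.inr 4)
          (attach_adj_inr_inr.mpr (by decide)) (attach_adj_inr_inr.mpr (by decide)) (by simp)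
      · exact absurd rfl hj
    refine ⟨?_, ?_, ?_⟩
    · rintro (u | i)
      · obtain ⟨y, hy⟩ := hne u
        exact ⟨Sum.inl y, mem_nbr (attach_adj_inl_inl.mpr hy)⟩
      · fin_cases i
        · exact ⟨Sum.inl v, mem_nbr (attach_adj_inr_inl.mpr ⟨rfl, rfl⟩)⟩
        · exact ⟨Sum.inr 0, show (attach G (pathGraph 5) v 0).Adj (Sum.inr 1) (Sum.inr 0) from attach_adj_inr_inr.mpr (by decide)⟩
        · exact ⟨Sum.inr 1, show (attach G (pathGraph 5) v 0).Adj (Sum.inr 2) (Sum.inr 1) from attach_adj_inr_inr.mpr (by decide)⟩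
        · exact ⟨Sum.inr 2, show (attach G (pathGraph 5) v 0).Adj (Sum.inr 3) (Sum.inr 2) from attach_adj_inr_inr.mpr (by decide)⟩
        · exact ⟨Sum.inr 3, show (attach G (pathGraph 5) v 0).Adj (Sum.inr 4) (Sum.inr 3) from attach_adj_inr_inr.mpr (by decide)⟩
    · rintro (u | i) ⟨y, hy, hyl⟩
      · rcases y with u' | b
        · by_cases huv : u' = v
          · subst huv; exact absurd hyl hnlv
          · exact hs u ⟨u', attach_adj_inl_inl.mp hy, isLeaf_inl_of_ne huv hyl⟩
        · obtain ⟨rfl, rfl⟩ := attach_adj_inl_inr.mp hy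
          exact absurd hyl (hnlp 0 (by decide))
      · rcases y with a | j
        · obtain ⟨rfl, rfl⟩ := attach_adj_inr_inl.mp hy
          exact absurd hyl hnlv
        · by_cases hj : j = 4
          · subst hj
            have hadj := attach_adj_inr_inr.mp hy
            rw [SimpleGraph.pathGraph_adj] at hadj
            have : i = 3 := by omega
            subst this; rfl
          · exact absurd hyl (hnlp j hj)
    · rintro (u | i) hu
      · by_cases huv : u = v
        · subst huv; exact absurd hu hnlv
        · simpa using hl u (isLeaf_inl_of_ne huv hu)
      · by_cases hi : i = 4
        · subst hi; rfl
        · exact absurd hu (hnlp i hi)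
  | @iso V' W' G H f e h ih =>
    obtain ⟨hne, hs, hl⟩ := ih
    refine ⟨?_, ?_, ?_⟩
    · intro u
      obtain ⟨x, hx⟩ := hne (e.symm u)
      refine ⟨e x, ?_⟩
      have := e.map_adj_iff.mpr hx
      rwa [RelIso.apply_symm_apply] at this
    · rintro u ⟨y, hy, hyl⟩
      exact hs (e.symm u) ⟨e.symm y, e.symm.map_adj_iff.mpr hy, iso_isLeaf hyl⟩
    · intro u hu
      exact hl (e.symm u) (iso_isLeaf hu)

/-- If `(T, S) ∈ 𝒯`, then every support vertex of `T` is labeled `A`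
and every leaf of `T` is labeled `C`. -/
theorem tFamily_support_label_A_leaf_label_C {V : Type} [Fintype V] (T : SimpleGraph V)
    (f : V → Label) (hT : T.IsTree) (h : TFamily T f) :
    (∀ v : V, IsSupport T v → f v = Label.A) ∧
      (∀ v : V, IsLeaf T v → f v = Label.C) := by
  obtain ⟨_, hs, hl⟩ := tfam_aux h
  exact ⟨hs, hl⟩
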